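/- Let a, b > 0 and let p(x) = (b^a / Γ(a)) x^{−a−1} e^{−b/x} for x > 0 be the density of the inverse gamma distribution with shape a and scale b. Then for any integers p ≤ n, ∫₀^∞ (Γ(0.5x + 0.5) / Γ(0.5x))^{n−p} · x^{(p−n)/2} · p(x) dx < ∞. -/

import Mathlib

open MeasureTheory

lemma gamma_half_bound {t : ℝ} (ht : 0 < t) :
    Real.Gamma (t + 1/2) ≤ Real.sqrt t * Real.Gamma t := by
  have h1 : (t : ℝ) ∈ Set.Ioi (0:ℝ) := ht
  have h2 : (t + 1 : ℝ) ∈ Set.Ioi (0:ℝ) := by simp [Set.mem_Ioi]; linarith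
  have hc := Real.convexOn_log_Gamma.2 h1 h2 (by norm_num : (0:ℝ) ≤ 1/2)
    (by norm_num : (0:ℝ) ≤ 1/2) (by norm_num)
  simp only [smul_eq_mul, Function.comp_apply] at hc
  have he : (1/2 : ℝ) * t + (1/2) * (t + 1) = t + 1/2 := by ring
  rw [he] at hc
  have hG : 0 < Real.Gamma t := Real.Gamma_pos_of_pos ht
  have hG1 : 0 < Real.Gamma (t + 1) := Real.Gamma_pos_of_pos (by linarith)
  have hGh : 0 < Real.Gamma (t + 1/2) := Real.Gamma_pos_of_pos (by linarith)
  have := Real.exp_le_exp.mpr hc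
  rw [Real.exp_log hGh, Real.exp_add, ← Real.exp_log hG, ← Real.exp_log hG1] at this
  calc Real.Gamma (t + 1/2) ≤ Real.exp ((1/2) * Real.log (Real.Gamma t)) *
        Real.exp ((1/2) * Real.log (Real.Gamma (t+1))) := by
        simpa [Real.exp_log hG, Real.exp_log hG1] using this
    _ = Real.sqrt (Real.Gamma t) * Real.sqrt (Real.Gamma (t+1)) := by
        rw [Real.sqrt_eq_rpow, Real.sqrt_eq_rpow, Real.rpow_def_of_pos hG,
          Real.rpow_def_of_pos hG1]; ring_nf
    _ = Real.sqrt t * Real.Gamma t := by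
        rw [Real.Gamma_add_one ht.ne', Real.sqrt_mul ht.le, ← mul_assoc,
          mul_comm (Real.sqrt (Real.Gamma t)) (Real.sqrt t), mul_assoc,
          Real.mul_self_sqrt hG.le]

lemma invgamma_integrable {a b : ℝ} (ha : 0 < a) (hb : 0 < b) :
    IntegrableOn (fun x : ℝ => x ^ (-a - 1) * Real.exp (-b / x)) (Set.Ioi 0) := by
  have himg : (fun y : ℝ => b / y) '' Set.Ioi 0 = Set.Ioi 0 := by
    ext x
    simp only [Set.mem_image, Set.mem_Ioi]
    constructor
    · rintro ⟨y, hy, rfl⟩; positivity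
    · intro hx; exact ⟨b / x, by positivity, by field_simp⟩
  have hderiv : ∀ y ∈ Set.Ioi (0:ℝ), HasDerivWithinAt (fun y : ℝ => b / y)
      (-b / y ^ 2) (Set.Ioi 0) y := by
    intro y hy
    have : HasDerivAt (fun y : ℝ => b / y) (-b / y ^ 2) y := by
      simpa [div_eq_mul_inv, neg_div] using
        (hasDerivAt_inv (ne_of_gt hy)).const_mul b
    exact this.hasDerivWithinAt
  have hinj : Set.InjOn (fun y : ℝ => b / y) (Set.Ioi 0) := by
    intro x hx y hy hxy
    have hx0 : (x:ℝ) ≠ 0 := ne_of_gt hx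
    have hy0 : (y:ℝ) ≠ 0 := ne_of_gt hy
    field_simp at hxy
    linarith
  have key := integrableOn_image_iff_integrableOn_abs_deriv_smul measurableSet_Ioi hderiv hinj
    (fun x : ℝ => x ^ (-a - 1) * Real.exp (-b / x))
  rw [himg] at key
  rw [key]
  have hG : IntegrableOn (fun y : ℝ => Real.exp (-y) * y ^ (a - 1)) (Set.Ioi 0) :=
    Real.GammaIntegral_convergent ha
  have hI : IntegrableOn (fun y : ℝ => b ^ (-a) * (Real.exp (-y) * y ^ (a - 1)))
      (Set.Ioi 0) := hG.const_mul (b ^ (-a))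
  apply hI.congr_fun ?_ measurableSet_Ioi
  intro y hy
  have hy0 : (0:ℝ) < y := hy
  simp only [smul_eq_mul]
  have h1 : |(-b / y ^ 2)| = b / y ^ 2 := by
    rw [abs_div, abs_neg, abs_of_pos hb, abs_of_pos (pow_pos hy0 2)]
  rw [h1]
  have hyinv : y ^ (-a - 1 : ℝ) = (y ^ (a + 1 : ℝ))⁻¹ := by
    rw [show (-a - 1 : ℝ) = -(a+1) by ring, Real.rpow_neg hy0.le]
  have h2 : (b / y) ^ (-a - 1 : ℝ) = b ^ (-a - 1 : ℝ) * y ^ (a + 1 : ℝ) := by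
    rw [Real.div_rpow hb.le hy0.le, hyinv]; field_simp
  have h3 : -b / (b / y) = -y := by field_simp
  rw [h2, h3]
  have hyp : y ^ (a - 1 : ℝ) = y ^ (a + 1 : ℝ) / y ^ 2 := by
    rw [eq_div_iff (by positivity : (y:ℝ)^2 ≠ 0), ← Real.rpow_natCast y 2,
      ← Real.rpow_add hy0]
    ring_nf
  rw [hyp]
  rw [show (-a - 1 : ℝ) = -a + (-1) by ring, Real.rpow_add hb, Real.rpow_neg_one]
  field_simp

/-- Lemma A.1: a Gamma-ratio integral against the inverse gamma density is finite. -/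
theorem gamma_ratio_inverse_gamma_integral_finite
    (a b : ℝ) (ha : 0 < a) (hb : 0 < b) (n p : ℕ) (hpn : p ≤ n) :
    ∫⁻ x in Set.Ioi (0:ℝ),
      ENNReal.ofReal
        ((Real.Gamma (0.5 * x + 0.5) / Real.Gamma (0.5 * x)) ^ (n - p) *
          x ^ (((p : ℝ) - n) / 2) *
          (b ^ a / Real.Gamma a * x ^ (-a - 1) * Real.exp (-b / x))) < ⊤ := by
  set K : ℝ := b ^ a / Real.Gamma a with hK
  have hK0 : 0 ≤ K := by
    have := Real.Gamma_pos_of_pos ha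
    positivity
  set g : ℝ → ℝ := fun x => K * (x ^ (-a - 1) * Real.exp (-b / x)) with hg
  -- pointwise bound
  have hbound : ∀ x ∈ Set.Ioi (0:ℝ),
      ENNReal.ofReal
        ((Real.Gamma (0.5 * x + 0.5) / Real.Gamma (0.5 * x)) ^ (n - p) *
          x ^ (((p : ℝ) - n) / 2) *
          (K * x ^ (-a - 1) * Real.exp (-b / x))) ≤ ENNReal.ofReal (g x) := by
    intro x hx
    have hx0 : (0:ℝ) < x := hx
    apply ENNReal.ofReal_le_ofReal
    have ht : (0:ℝ) < 0.5 * x := by linarith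
    have hGt : 0 < Real.Gamma (0.5 * x) := Real.Gamma_pos_of_pos ht
    have hratio : Real.Gamma (0.5 * x + 0.5) / Real.Gamma (0.5 * x) ≤ Real.sqrt x := by
      rw [div_le_iff₀ hGt]
      calc Real.Gamma (0.5 * x + 0.5) = Real.Gamma (0.5 * x + 1/2) := by norm_num
        _ ≤ Real.sqrt (0.5 * x) * Real.Gamma (0.5 * x) := gamma_half_bound ht
        _ ≤ Real.sqrt x * Real.Gamma (0.5 * x) := by
            apply mul_le_mul_of_nonneg_right _ hGt.le
            exact Real.sqrt_le_sqrt (by linarith)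
    have hrnn : 0 ≤ Real.Gamma (0.5 * x + 0.5) / Real.Gamma (0.5 * x) := by
      have := Real.Gamma_pos_of_pos (show (0:ℝ) < 0.5 * x + 0.5 by linarith)
      positivity
    have hpow : (Real.Gamma (0.5 * x + 0.5) / Real.Gamma (0.5 * x)) ^ (n - p) ≤
        x ^ (((n : ℝ) - p) / 2) := by
      calc (Real.Gamma (0.5 * x + 0.5) / Real.Gamma (0.5 * x)) ^ (n - p)
          ≤ (Real.sqrt x) ^ (n - p) := pow_le_pow_left₀ hrnn hratio _
        _ = x ^ (((n : ℝ) - p) / 2) := by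
            rw [Real.sqrt_eq_rpow, ← Real.rpow_natCast (x ^ ((1:ℝ)/2)) (n - p),
              ← Real.rpow_mul hx0.le]
            congr 1
            rw [Nat.cast_sub hpn]
            ring
    have hmain : (Real.Gamma (0.5 * x + 0.5) / Real.Gamma (0.5 * x)) ^ (n - p) *
        x ^ (((p : ℝ) - n) / 2) ≤ 1 := by
      have hxe : (0:ℝ) ≤ x ^ (((p : ℝ) - n) / 2) := Real.rpow_nonneg hx0.le _
      calc (Real.Gamma (0.5 * x + 0.5) / Real.Gamma (0.5 * x)) ^ (n - p) *
            x ^ (((p : ℝ) - n) / 2)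
          ≤ x ^ (((n : ℝ) - p) / 2) * x ^ (((p : ℝ) - n) / 2) :=
            mul_le_mul_of_nonneg_right hpow hxe
        _ = x ^ ((((n : ℝ) - p) / 2) + (((p : ℝ) - n) / 2)) := (Real.rpow_add hx0 _ _).symm
        _ = 1 := by rw [show (((n : ℝ) - p) / 2) + (((p : ℝ) - n) / 2) = 0 by ring,
            Real.rpow_zero]
    have hgnn : 0 ≤ x ^ (-a - 1 : ℝ) * Real.exp (-b / x) := by positivity
    calc (Real.Gamma (0.5 * x + 0.5) / Real.Gamma (0.5 * x)) ^ (n - p) *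
          x ^ (((p : ℝ) - n) / 2) * (K * x ^ (-a - 1) * Real.exp (-b / x))
        = ((Real.Gamma (0.5 * x + 0.5) / Real.Gamma (0.5 * x)) ^ (n - p) *
          x ^ (((p : ℝ) - n) / 2)) * (K * (x ^ (-a - 1) * Real.exp (-b / x))) := by ring
      _ ≤ 1 * (K * (x ^ (-a - 1) * Real.exp (-b / x))) := by
          apply mul_le_mul_of_nonneg_right hmain
          positivity
      _ = g x := by rw [one_mul]
  calc ∫⁻ x in Set.Ioi (0:ℝ), ENNReal.ofReal
        ((Real.Gamma (0.5 * x + 0.5) / Real.Gamma (0.5 * x)) ^ (n - p) *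
          x ^ (((p : ℝ) - n) / 2) *
          (K * x ^ (-a - 1) * Real.exp (-b / x)))
      ≤ ∫⁻ x in Set.Ioi (0:ℝ), ENNReal.ofReal (g x) :=
        setLIntegral_mono' measurableSet_Ioi hbound
    _ < ⊤ := by
        have hint : IntegrableOn g (Set.Ioi 0) :=
          (invgamma_integrable ha hb).const_mul K
        exact hint.setLIntegral_lt_top
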